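/- Let T ∈ GL(2,ℝ) have at least one positive real eigenvalue, and let a ∈ ℝ² be nonzero with ‖T⁻¹(a)‖ < 1. Then the homeomorphism T̄ₐ(x) = (a+T(x))/‖a+T(x)‖ of S¹ has a fixed point. -/

import Mathlib

/-- The "affine" map `x ↦ (a + T(x))/‖a + T(x)‖` induced on the unit sphere. -/
noncomputable def affAct {m : ℕ} (A : Matrix (Fin m) (Fin m) ℝ)
    (a x : EuclideanSpace ℝ (Fin m)) : EuclideanSpace ℝ (Fin m) :=
  ‖a + Matrix.toEuclideanLin A x‖⁻¹ • (a + Matrix.toEuclideanLin A x)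

/-- If `a + T x = c • x` with `c > 0` and `‖x‖ = 1`, then `x` is a fixed point of `affAct`. -/
lemma affAct_fixed_of {m : ℕ} (M : Matrix (Fin m) (Fin m) ℝ)
    (a x : EuclideanSpace ℝ (Fin m)) (c : ℝ) (hc : 0 < c) (hx : ‖x‖ = 1)
    (hax : a + Matrix.toEuclideanLin M x = c • x) : affAct M a x = x := by
  rw [affAct, hax, norm_smul, Real.norm_eq_abs, abs_of_pos hc, hx, mul_one, smul_smul,
    inv_mul_cancel₀ hc.ne', one_smul]

/-- Cayley–Hamilton for 2×2 real matrices. -/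
lemma ch_fin_two (M : Matrix (Fin 2) (Fin 2) ℝ) :
    M * M = M.trace • M - M.det • (1 : Matrix (Fin 2) (Fin 2) ℝ) := by
  ext i j
  fin_cases i <;> fin_cases j <;>
    simp [Matrix.mul_apply, Fin.sum_univ_two, Matrix.trace_fin_two, Matrix.det_fin_two,
      Matrix.one_apply, Matrix.sub_apply, Matrix.smul_apply] <;> ring

set_option maxHeartbeats 1000000 in
theorem stmt14 (T : GL (Fin 2) ℝ)
    (heig : ∃ l : ℝ, 0 < l ∧ ∃ v : EuclideanSpace ℝ (Fin 2), v ≠ 0 ∧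
      Matrix.toEuclideanLin (T : Matrix (Fin 2) (Fin 2) ℝ) v = l • v)
    (a : EuclideanSpace ℝ (Fin 2)) (ha : a ≠ 0)
    (hlt : ‖Matrix.toEuclideanLin ((T⁻¹ : GL (Fin 2) ℝ) : Matrix (Fin 2) (Fin 2) ℝ) a‖ < 1) :
    ∃ x : EuclideanSpace ℝ (Fin 2), ‖x‖ = 1 ∧
      affAct (T : Matrix (Fin 2) (Fin 2) ℝ) a x = x := by
  obtain ⟨l, hl, v, hv, hAv⟩ := heig
  set M : Matrix (Fin 2) (Fin 2) ℝ := (T : Matrix (Fin 2) (Fin 2) ℝ) with hM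
  set A := Matrix.toEuclideanLin M with hA
  set τ : ℝ := M.trace with hτ
  set δ : ℝ := M.det with hδdef
  -- Cayley–Hamilton on vectors
  have key1 : ∀ y : EuclideanSpace ℝ (Fin 2), A (A y) = τ • A y - δ • y := by
    intro y
    have h1 : A (A y) = Matrix.toEuclideanLin (M * M) y := by
      simp [hA, Matrix.toEuclideanLin_apply, Matrix.mulVec_mulVec]
    rw [h1, ch_fin_two M, map_sub, map_smul, map_smul]
    simp [hA, hτ, hδdef, Matrix.toEuclideanLin_apply]
  have hna : (0:ℝ) < ‖a‖ := norm_pos_iff.mpr ha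
  have hδ : δ ≠ 0 := ((Matrix.isUnit_iff_isUnit_det _).mp T.isUnit).ne_zero
  -- `l` is a root of the characteristic polynomial
  have hpl : l * l - τ * l + δ = 0 := by
    have h2 : A (A v) = (l * l) • v := by rw [hAv, map_smul, hAv, smul_smul]
    have h3 := key1 v
    rw [h2, hAv, smul_smul, ← sub_smul] at h3
    have h4 : (l * l - (τ * l - δ)) • v = 0 := by rw [sub_smul, h3, sub_self]
    have h5 := (smul_eq_zero.mp h4).resolve_right hv
    linarith [h5]
  set lam : ℝ := max l (τ - l) with hlamdef
  set mu : ℝ := min l (τ - l) with hmudef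
  have hsum : lam + mu = τ := by
    rw [hlamdef, hmudef, max_add_min]; ring
  have hprod : lam * mu = δ := by
    have : lam * mu = l * (τ - l) := by
      rcases le_total l (τ - l) with h | h
      · rw [hlamdef, hmudef, max_eq_right h, min_eq_left h]; ring
      · rw [hlamdef, hmudef, max_eq_left h, min_eq_right h]
    rw [this]; nlinarith [hpl]
  have hlam_pos : 0 < lam := lt_of_lt_of_le hl (le_max_left _ _)
  have hmule : mu ≤ lam := min_le_max
  set Aa := A a with hAadef
  set q : ℝ → EuclideanSpace ℝ (Fin 2) := fun c => (c - τ) • a + Aa with hq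
  have key2 : ∀ c : ℝ, A (q c) = c • q c - ((c - lam) * (c - mu)) • a := by
    intro c
    have h5 : A (q c) = (c - τ) • Aa + (τ • Aa - δ • a) := by
      simp only [hq, map_add, map_smul]
      rw [key1 a]
    have hpc : (c - lam) * (c - mu) = c * c - τ * c + δ := by
      rw [← hsum, ← hprod]; ring
    rw [h5, hpc]
    simp only [hq]
    module
  by_cases hq0 : q lam = 0
  · -- `a` is an eigenvector with eigenvalue `mu`
    have hq0' : (lam - τ) • a + Aa = 0 := by
      have := hq0
      rw [hq] at this
      exact this
    have hAa : Aa = mu • a := by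
      have h6 : Aa = -((lam - τ) • a) := by
        rw [add_comm] at hq0'
        exact add_eq_zero_iff_eq_neg.mp hq0'
      rw [h6, ← neg_smul]
      congr 1
      linarith [hsum]
    by_cases hmu : 0 < ‖a‖ + mu
    · -- direct fixed point along `a`
      refine ⟨‖a‖⁻¹ • a, ?_, ?_⟩
      · rw [norm_smul, Real.norm_eq_abs, abs_of_pos (inv_pos.mpr hna), inv_mul_cancel₀ hna.ne']
      · refine affAct_fixed_of M a _ (‖a‖ + mu) hmu ?_ ?_
        · rw [norm_smul, Real.norm_eq_abs, abs_of_pos (inv_pos.mpr hna), inv_mul_cancel₀ hna.ne']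
        · rw [← hA, map_smul, ← hAadef, hAa, smul_smul, smul_smul]
          have h12 : (‖a‖ + mu) * ‖a‖⁻¹ = 1 + ‖a‖⁻¹ * mu := by
            rw [add_mul, mul_inv_cancel₀ hna.ne', mul_comm mu ‖a‖⁻¹]
          rw [h12, add_smul, one_smul]
    · -- `mu ≤ -‖a‖ < 0`, use the eigenvector `v` of `lam = l`
      push_neg at hmu
      have hmuneg : mu ≤ -‖a‖ := by linarith
      have hlameq : lam = l := by
        rcases le_total l (τ - l) with h | h
        · exfalso
          have : mu = l := by rw [hmudef, min_eq_left h]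
          linarith
        · rw [hlamdef, max_eq_left h]
      have hnv : (0:ℝ) < ‖v‖ := norm_pos_iff.mpr hv
      set α : ℝ := ‖a‖ / (lam - mu) with hα
      have hlm : ‖a‖ < lam - mu := by linarith
      have hα0 : 0 < α := div_pos hna (by linarith)
      have hα1 : α < 1 := (div_lt_one (by linarith)).mpr hlm
      set y : ℝ → EuclideanSpace ℝ (Fin 2) := fun t => (α * ‖a‖⁻¹) • a + t • v with hy
      have hcont : Continuous fun t : ℝ => ‖y t‖ :=
        (continuous_const.add (continuous_id.smul continuous_const)).norm
      have hy0 : ‖y 0‖ = α := by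
        simp [hy, norm_smul, abs_of_pos hα0, abs_of_pos (inv_pos.mpr hna),
          mul_assoc, inv_mul_cancel₀ hna.ne']
      set t₂ : ℝ := (1 + α) / ‖v‖ with ht₂
      have ht₂0 : 0 ≤ t₂ := le_of_lt (div_pos (by linarith) hnv)
      have hyt₂ : 1 ≤ ‖y t₂‖ := by
        have h7 : ‖t₂ • v‖ - ‖(α * ‖a‖⁻¹) • a‖ ≤ ‖y t₂‖ := by
          have := norm_sub_norm_le (t₂ • v) (-((α * ‖a‖⁻¹) • a))
          simpa [hy, add_comm, sub_neg_eq_add] using this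
        have h8 : ‖t₂ • v‖ = 1 + α := by
          rw [norm_smul, Real.norm_eq_abs, abs_of_nonneg ht₂0, ht₂,
            div_mul_cancel₀ _ hnv.ne']
        have h9 : ‖(α * ‖a‖⁻¹) • a‖ = α := by
          rw [norm_smul, Real.norm_eq_abs, abs_of_pos (mul_pos hα0 (inv_pos.mpr hna)),
            mul_assoc, inv_mul_cancel₀ hna.ne', mul_one]
        rw [h8, h9] at h7
        linarith
      obtain ⟨t, _, htt⟩ := intermediate_value_Icc ht₂0 hcont.continuousOn
        (by constructor <;> [linarith [hy0]; exact hyt₂] :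
          (1:ℝ) ∈ Set.Icc ‖y 0‖ ‖y t₂‖)
      refine ⟨y t, htt, ?_⟩
      refine affAct_fixed_of M a _ lam hlam_pos htt ?_
      have hAy : Matrix.toEuclideanLin M (y t) = (α * ‖a‖⁻¹ * mu) • a + (t * lam) • v := by
        rw [← hA, hy]
        simp only [map_add, map_smul]
        rw [← hAadef, hAa, hAv, ← hlameq, smul_smul, smul_smul]
      have hlmne : lam - mu ≠ 0 := by
        have : (0:ℝ) < lam - mu := by linarith
        exact this.ne'
      have hscal : 1 + α * ‖a‖⁻¹ * mu = lam * (α * ‖a‖⁻¹) := by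
        rw [hα]
        field_simp
        ring
      calc a + Matrix.toEuclideanLin M (y t)
          = (1 + α * ‖a‖⁻¹ * mu) • a + (t * lam) • v := by rw [hAy]; module
        _ = (lam * (α * ‖a‖⁻¹)) • a + (lam * t) • v := by rw [hscal, mul_comm t lam]
        _ = lam • y t := by rw [hy]; module
  · -- main case : IVT on `g c = ‖q c‖ - (c - lam) * (c - mu)` over `[lam, c₂]`
    set g : ℝ → ℝ := fun c => ‖q c‖ - (c - lam) * (c - mu) with hg
    have hcont : Continuous g := by
      rw [hg]
      simp only [hq]
      exact ((((continuous_id.sub continuous_const).smul continuous_const).add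
        continuous_const).norm).sub
        ((continuous_id.sub continuous_const).mul (continuous_id.sub continuous_const))
    have hglam : 0 < g lam := by
      have : 0 < ‖q lam‖ := norm_pos_iff.mpr hq0
      simp only [hg]
      rw [sub_self, zero_mul]
      linarith
    set K : ℝ := (lam - mu) + |mu| + ‖a‖ + ‖Aa‖ + 1 with hK
    have hK1 : 1 ≤ K - mu := by
      have := le_abs_self mu
      have := norm_nonneg a
      have := norm_nonneg Aa
      linarith
    have hKpos : 0 < K := by
      have := abs_nonneg mu
      have := norm_nonneg a
      have := norm_nonneg Aa
      linarith
    set c₂ : ℝ := lam + K with hc₂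
    have hc₂τ : c₂ - τ = K - mu := by rw [hc₂, ← hsum]; ring
    have hgc₂ : g c₂ < 0 := by
      have hb : ‖q c₂‖ ≤ |c₂ - τ| * ‖a‖ + ‖Aa‖ := by
        refine (norm_add_le _ _).trans ?_
        rw [norm_smul, Real.norm_eq_abs]
      rw [hc₂τ, abs_of_nonneg (by linarith)] at hb
      simp only [hg]
      have h10 : c₂ - lam = K := by rw [hc₂]; ring
      have h11 : c₂ - mu = K + (lam - mu) := by rw [hc₂]; ring
      rw [h10, h11]
      have hKa : ‖a‖ + 1 ≤ K := by
        have := le_abs_self mu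
        have := abs_nonneg mu
        have := norm_nonneg Aa
        linarith
      have hKAa : ‖Aa‖ + 1 ≤ K := by
        have := abs_nonneg mu
        have := norm_nonneg a
        linarith
      have e1 : (K - mu) * ‖a‖ ≤ (K + (lam - mu)) * ‖a‖ :=
        mul_le_mul_of_nonneg_right (by linarith) (norm_nonneg a)
      have e2 : (‖a‖ + 1) * (K + (lam - mu)) ≤ K * (K + (lam - mu)) :=
        mul_le_mul_of_nonneg_right hKa (by linarith)
      have e3 : (‖a‖ + 1) * (K + (lam - mu))
          = ‖a‖ * (K + (lam - mu)) + (K + (lam - mu)) := by ring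
      have e4 : (K + (lam - mu)) * ‖a‖ = ‖a‖ * (K + (lam - mu)) := by ring
      generalize hqn : ‖q c₂‖ = nq at hb ⊢
      linarith
    have hlamc₂ : lam ≤ c₂ := by rw [hc₂]; linarith
    obtain ⟨c, hcmem, hgc⟩ := intermediate_value_Icc' hlamc₂ hcont.continuousOn
      (by constructor <;> linarith : (0:ℝ) ∈ Set.Icc (g c₂) (g lam))
    have hlamc : lam < c := by
      rcases eq_or_lt_of_le hcmem.1 with h | h
      · exfalso; rw [h] at hglam; linarith
      · exact h
    set p : ℝ := (c - lam) * (c - mu) with hp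
    have hppos : 0 < p := mul_pos (by linarith) (by linarith)
    have hqc : ‖q c‖ = p := by
      simp only [hg] at hgc
      linarith
    refine ⟨p⁻¹ • q c, ?_, ?_⟩
    · rw [norm_smul, Real.norm_eq_abs, abs_of_pos (inv_pos.mpr hppos), hqc,
        inv_mul_cancel₀ hppos.ne']
    · refine affAct_fixed_of M a _ c (by linarith) ?_ ?_
      · rw [norm_smul, Real.norm_eq_abs, abs_of_pos (inv_pos.mpr hppos), hqc,
          inv_mul_cancel₀ hppos.ne']
      · have hpne : p ≠ 0 := hppos.ne'
        rw [← hA, map_smul, key2 c, ← hp, smul_sub, smul_smul, smul_smul,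
          inv_mul_cancel₀ hpne, one_smul, mul_comm p⁻¹ c, ← smul_smul]
        abel
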